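/- Let N ≥ 1 be an integer and P_max > 0, and p_t(Q) = 1 - γ(N, Q/P_max)/Γ(N). Then p_t''(Q) = e^{-Q/P_max}·(Q/P_max)^{N+1}·(Q - P_max(N-1))/(Q³·Γ(N)); in particular, p_t''(Q) < 0 for 0 < Q < P_max(N-1), p_t''(Q) = 0 at Q = P_max(N-1), and p_t''(Q) > 0 for Q > P_max(N-1). -/

import Mathlib

/-- The lower incomplete gamma function γ(s, x) = ∫₀^x t^{s-1} e^{-t} dt. -/
noncomputable def lowerGamma (s x : ℝ) : ℝ :=
  ∫ t in Set.Ioo 0 x, t ^ (s - 1) * Real.exp (-t)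

open Real MeasureTheory Set Filter intervalIntegral

noncomputable def Ff (n : ℕ) (x : ℝ) : ℝ := ∫ t in (0:ℝ)..x, t ^ n * Real.exp (-t)

lemma contf (n : ℕ) : Continuous (fun t : ℝ => t ^ n * Real.exp (-t)) :=
  (continuous_pow n).mul (Real.continuous_exp.comp continuous_neg)

lemma hasDerivAt_Ff (n : ℕ) (x : ℝ) : HasDerivAt (Ff n) (x ^ n * Real.exp (-x)) x :=
  intervalIntegral.integral_hasDerivAt_right ((contf n).intervalIntegrable 0 x)
    ((contf n).aestronglyMeasurable.stronglyMeasurableAtFilter)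
    (contf n).continuousAt

lemma lowerGamma_nonpos (s x : ℝ) (hx : x ≤ 0) : lowerGamma s x = 0 := by
  unfold lowerGamma
  rw [Ioo_eq_empty (not_lt.2 hx)]
  simp

lemma lowerGamma_eq (n : ℕ) (x : ℝ) (hx : 0 < x) :
    lowerGamma ((n+1 : ℕ) : ℝ) x = Ff n x := by
  unfold lowerGamma Ff
  rw [intervalIntegral.integral_of_le hx.le, integral_Ioc_eq_integral_Ioo]
  refine setIntegral_congr_fun measurableSet_Ioo (fun t ht => ?_)
  have h1 : ((n+1:ℕ):ℝ) - 1 = (n:ℝ) := by push_cast; ring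
  rw [h1, Real.rpow_natCast]

lemma hasDerivAt_G (n : ℕ) (P c : ℝ) (hP : 0 < P) (Q : ℝ) :
    HasDerivAt (fun Q : ℝ => 1 - Ff n (Q/P) / c)
      (-(((Q/P)^n * Real.exp (-(Q/P))) * (1/P) / c)) Q := by
  have h1 : HasDerivAt (fun Q : ℝ => Q / P) (1/P) Q := by
    simpa using (hasDerivAt_id Q).div_const P
  have h2 := (hasDerivAt_Ff n (Q/P)).comp Q h1
  simpa using (h2.div_const c).const_sub 1

lemma deriv_G (n : ℕ) (P c : ℝ) (hP : 0 < P) :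
    deriv (fun Q : ℝ => 1 - Ff n (Q/P) / c)
      = fun Q : ℝ => -(((Q/P)^n * Real.exp (-(Q/P))) * (1/P) / c) :=
  funext fun Q => (hasDerivAt_G n P c hP Q).deriv

lemma hasDerivAt_derivG (n : ℕ) (P c : ℝ) (hP : 0 < P) (Q : ℝ) :
    HasDerivAt (fun Q : ℝ => -(((Q/P)^n * Real.exp (-(Q/P))) * (1/P) / c))
      (-(((((n:ℝ) * (Q/P)^(n-1)) * (1/P)) * Real.exp (-(Q/P))
          + (Q/P)^n * (Real.exp (-(Q/P)) * (-(1/P)))) * (1/P) / c)) Q := by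
  have h1 : HasDerivAt (fun Q : ℝ => Q / P) (1/P) Q := by
    simpa using (hasDerivAt_id Q).div_const P
  have h2 : HasDerivAt (fun Q : ℝ => (Q/P)^n) (((n:ℝ) * (Q/P)^(n-1)) * (1/P)) Q :=
    (hasDerivAt_pow n (Q/P)).comp Q h1
  have h3 : HasDerivAt (fun Q : ℝ => Real.exp (-(Q/P))) (Real.exp (-(Q/P)) * (-(1/P))) Q :=
    (Real.hasDerivAt_exp (-(Q/P))).comp (h := fun Q => -(Q/P)) Q h1.neg
  exact (((h2.mul h3).mul_const (1/P)).div_const c).neg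

lemma alg (n : ℕ) (P c Q : ℝ) (hP : P ≠ 0) (hc : c ≠ 0) (hQ : Q ≠ 0) :
    -(((((n:ℝ) * (Q/P)^(n-1)) * (1/P)) * Real.exp (-(Q/P))
          + (Q/P)^n * (Real.exp (-(Q/P)) * (-(1/P)))) * (1/P) / c)
      = Real.exp (-(Q/P)) * (Q/P)^(n+2) * (Q - P * (n:ℝ)) / (Q^3 * c) := by
  rcases n with _ | m
  · field_simp
    ring_nf
    field_simp
  · have hm : m + 1 - 1 = m := rfl
    rw [hm]
    field_simp
    ring_nf
    field_simp

theorem pt_second_deriv (N : ℕ) (hN : 1 ≤ N) (Pmax : ℝ) (hP : 0 < Pmax) :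
    (∀ Q : ℝ, 0 < Q →
      deriv (deriv (fun Q : ℝ => 1 - lowerGamma N (Q / Pmax) / Real.Gamma N)) Q
        = Real.exp (-(Q / Pmax)) * (Q / Pmax) ^ (N + 1) * (Q - Pmax * ((N : ℝ) - 1)) /
            (Q ^ 3 * Real.Gamma N)) ∧
    (∀ Q : ℝ, 0 < Q → Q < Pmax * ((N : ℝ) - 1) →
      deriv (deriv (fun Q : ℝ => 1 - lowerGamma N (Q / Pmax) / Real.Gamma N)) Q < 0) ∧
    deriv (deriv (fun Q : ℝ => 1 - lowerGamma N (Q / Pmax) / Real.Gamma N))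
        (Pmax * ((N : ℝ) - 1)) = 0 ∧
    (∀ Q : ℝ, Pmax * ((N : ℝ) - 1) < Q →
      deriv (deriv (fun Q : ℝ => 1 - lowerGamma N (Q / Pmax) / Real.Gamma N)) Q > 0) := by
  obtain ⟨n, rfl⟩ : ∃ n, N = n + 1 := ⟨N - 1, (Nat.succ_pred_eq_of_pos hN).symm⟩
  set c : ℝ := Real.Gamma ((n + 1 : ℕ) : ℝ) with hcdef
  have hc : 0 < c := Real.Gamma_pos_of_pos (by positivity)
  set p : ℝ → ℝ := fun Q => 1 - lowerGamma ((n + 1 : ℕ) : ℝ) (Q / Pmax) / c with hpdef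
  set G : ℝ → ℝ := fun Q => 1 - Ff n (Q / Pmax) / c with hGdef
  have hcast : ((n + 1 : ℕ) : ℝ) - 1 = (n : ℝ) := by push_cast; ring
  have hpg : ∀ x : ℝ, 0 < x → p x = G x := by
    intro x hx
    simp only [hpdef, hGdef, lowerGamma_eq n (x / Pmax) (by positivity)]
  have heq : ∀ Q : ℝ, 0 < Q → p =ᶠ[nhds Q] G := fun Q hQ =>
    eventuallyEq_of_mem (Ioi_mem_nhds hQ) (fun x hx => hpg x hx)
  have claim1 : ∀ Q : ℝ, 0 < Q → deriv (deriv p) Q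
      = Real.exp (-(Q / Pmax)) * (Q / Pmax) ^ (n + 1 + 1) * (Q - Pmax * (n : ℝ)) /
          (Q ^ 3 * c) := by
    intro Q hQ
    rw [((heq Q hQ).deriv).deriv_eq, deriv_G n Pmax c hP,
      (hasDerivAt_derivG n Pmax c hP Q).deriv]
    exact alg n Pmax c Q hP.ne' hc.ne' hQ.ne'
  refine ⟨by intro Q hQ; rw [hcast]; exact claim1 Q hQ, ?_, ?_, ?_⟩
  · intro Q hQ hQ2
    rw [hcast] at hQ2
    rw [claim1 Q hQ]
    apply div_neg_of_neg_of_pos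
    · apply mul_neg_of_pos_of_neg (by positivity) (by linarith)
    · positivity
  · rw [hcast]
    rcases Nat.eq_zero_or_pos n with hn0 | hn1
    · subst hn0
      have hpt : Pmax * ((0 : ℕ) : ℝ) = 0 := by simp
      rw [hpt]
      have hp1 : ∀ x : ℝ, x ≤ 0 → p x = 1 := by
        intro x hx
        simp [hpdef, lowerGamma_nonpos _ _ (div_nonpos_of_nonpos_of_nonneg hx hP.le)]
      have hG0 : p 0 = G 0 := by
        simp [hpdef, hGdef, lowerGamma_nonpos _ _ le_rfl, Ff, intervalIntegral.integral_same]
      have hleft : HasDerivWithinAt p 0 (Iio 0) 0 :=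
        (hasDerivWithinAt_const (0:ℝ) (Iio 0) (1:ℝ)).congr
          (fun x hx => hp1 x (le_of_lt hx)) (hp1 0 le_rfl)
      have hright : HasDerivWithinAt p (-((((0:ℝ)/Pmax)^0 * Real.exp (-((0:ℝ)/Pmax))) * (1/Pmax) / c)) (Ioi 0) 0 :=
        ((hasDerivAt_G 0 Pmax c hP 0).hasDerivWithinAt).congr
          (fun x hx => hpg x hx) hG0
      have hval : -((((0:ℝ)/Pmax)^0 * Real.exp (-((0:ℝ)/Pmax))) * (1/Pmax) / c) = -(1/(Pmax * c)) := by
        simp; ring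
      have hne : -(1/(Pmax * c)) ≠ 0 := by
        have : 0 < 1/(Pmax * c) := by positivity
        linarith
      have hnd : ¬ DifferentiableAt ℝ p 0 := by
        intro h
        have h1 := (h.hasDerivAt).hasDerivWithinAt (s := Iio (0:ℝ))
        have h2 := (h.hasDerivAt).hasDerivWithinAt (s := Ioi (0:ℝ))
        have e1 : deriv p 0 = 0 := (uniqueDiffWithinAt_Iio (0:ℝ)).eq_deriv _ h1 hleft
        have e2 : deriv p 0 = -(1/(Pmax * c)) := by
          rw [← hval]; exact (uniqueDiffWithinAt_Ioi (0:ℝ)).eq_deriv _ h2 hright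
        exact hne (e1.symm.trans e2).symm
      have hd0 : deriv p 0 = 0 := deriv_zero_of_not_differentiableAt hnd
      have hnd2 : ¬ DifferentiableAt ℝ (deriv p) 0 := by
        intro h
        have hct := h.continuousAt
        rw [ContinuousAt, hd0] at hct
        have ht : Tendsto (deriv p) (nhdsWithin 0 (Ioi 0)) (nhds 0) :=
          hct.mono_left nhdsWithin_le_nhds
        have heq' : deriv p =ᶠ[nhdsWithin (0:ℝ) (Ioi 0)]
            (fun Q : ℝ => -(((Q/Pmax)^0 * Real.exp (-(Q/Pmax))) * (1/Pmax) / c)) := by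
          filter_upwards [self_mem_nhdsWithin] with x hx
          rw [(heq x hx).deriv_eq, deriv_G 0 Pmax c hP]
        have hcont : ContinuousAt (fun Q : ℝ => -(((Q/Pmax)^0 * Real.exp (-(Q/Pmax))) * (1/Pmax) / c)) 0 := by
          fun_prop
        have ht2 : Tendsto (fun Q : ℝ => -(((Q/Pmax)^0 * Real.exp (-(Q/Pmax))) * (1/Pmax) / c))
            (nhdsWithin 0 (Ioi 0)) (nhds (-(1/(Pmax * c)))) := by
          rw [← hval]
          exact hcont.continuousWithinAt.tendsto
        have := tendsto_nhds_unique (Filter.Tendsto.congr' heq' ht) ht2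
        exact hne this.symm
      exact deriv_zero_of_not_differentiableAt hnd2
    · have hQ0 : 0 < Pmax * ((n : ℕ) : ℝ) := by
        have : (0:ℝ) < (n:ℝ) := by exact_mod_cast hn1
        positivity
      rw [claim1 _ hQ0]
      simp
  · intro Q hQ
    rw [hcast] at hQ
    have hQpos : 0 < Q := lt_of_le_of_lt (by positivity) hQ
    rw [claim1 Q hQpos]
    apply div_pos
    · apply mul_pos (by positivity) (by linarith)
    · positivity
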